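/- If E₁, E₂ ⊆ M_{n×n}(F) are sets whose closures are irreducible algebraic cones over an algebraically closed field F of characteristic zero, then the linear capacity satisfies Λ(E₁ × E₂) = Λ(E₁) + Λ(E₂), where Λ(E) is the maximal dimension of a linear subspace contained in the closure of E. -/

import Mathlib

/-- The Zariski topology on an affine coordinate space `σ → F`. -/
noncomputable def coordZariski (σ F : Type*) [CommRing F] : TopologicalSpace (σ → F) :=
  TopologicalSpace.generateFrom
    {U | ∃ p : MvPolynomial σ F, U = {x | MvPolynomial.eval x p ≠ 0}}

/-- The Zariski topology on `n × n` matrices over `F`. -/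
noncomputable def matrixZariski (n : ℕ) (F : Type*) [CommRing F] :
    TopologicalSpace (Matrix (Fin n) (Fin n) F) :=
  TopologicalSpace.induced (fun M (c : Fin n × Fin n) => M c.1 c.2)
    (coordZariski (Fin n × Fin n) F)

/-- The Zariski topology on pairs of `n × n` matrices over `F`. -/
noncomputable def matrixPairZariski (n : ℕ) (F : Type*) [CommRing F] :
    TopologicalSpace (Matrix (Fin n) (Fin n) F × Matrix (Fin n) (Fin n) F) :=
  TopologicalSpace.induced
    (fun M (c : (Fin n × Fin n) ⊕ (Fin n × Fin n)) =>
      Sum.elim (fun c => M.1 c.1 c.2) (fun c => M.2 c.1 c.2) c)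
    (coordZariski ((Fin n × Fin n) ⊕ (Fin n × Fin n)) F)

/-- The linear capacity of a subset of the matrix space: the maximal dimension of a
linear subspace contained in its (Zariski) closure. -/
noncomputable def linCap {n : ℕ} {F : Type*} [Field F]
    (E : Set (Matrix (Fin n) (Fin n) F)) : ℕ :=
  sSup {d | ∃ L : Submodule F (Matrix (Fin n) (Fin n) F),
    (L : Set (Matrix (Fin n) (Fin n) F)) ⊆ @closure _ (matrixZariski n F) E ∧
    Module.finrank F L = d}

/-- The linear capacity of a subset of the space of pairs of matrices. -/
noncomputable def linCapPair {n : ℕ} {F : Type*} [Field F]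
    (E : Set (Matrix (Fin n) (Fin n) F × Matrix (Fin n) (Fin n) F)) : ℕ :=
  sSup {d | ∃ L : Submodule F (Matrix (Fin n) (Fin n) F × Matrix (Fin n) (Fin n) F),
    (L : Set (Matrix (Fin n) (Fin n) F × Matrix (Fin n) (Fin n) F)) ⊆
      @closure _ (matrixPairZariski n F) E ∧
    Module.finrank F L = d}


open MvPolynomial TopologicalSpace Topology

section Topology

variable {F : Type*} [CommRing F]

/-- Polynomial maps between coordinate spaces are continuous for the Zariski topologies. -/
lemma coord_polyMap_continuous {σ τ : Type*} (q : τ → MvPolynomial σ F) :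
    Continuous[coordZariski σ F, coordZariski τ F]
      (fun x t => MvPolynomial.eval x (q t)) := by
  unfold coordZariski
  rw [continuous_generateFrom_iff]
  rintro U ⟨p, rfl⟩
  have h : (fun (x : σ → F) t => MvPolynomial.eval x (q t)) ⁻¹' {x | MvPolynomial.eval x p ≠ 0}
      = {x | MvPolynomial.eval x (MvPolynomial.bind₁ q p) ≠ 0} := by
    ext x
    have := MvPolynomial.eval₂Hom_bind₁ (RingHom.id F) x q p
    simp only [Set.mem_preimage, Set.mem_setOf_eq]
    rw [show (MvPolynomial.eval x : MvPolynomial σ F →+* F)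
        = MvPolynomial.eval₂Hom (RingHom.id F) x from rfl,
      MvPolynomial.eval₂Hom_bind₁]
    rfl
  rw [h]
  exact isOpen_generateFrom_of_mem ⟨_, rfl⟩

end Topology

section Matrices

variable {n : ℕ} {F : Type*} [CommRing F]

lemma cont_fst :
    Continuous[matrixPairZariski n F, matrixZariski n F] Prod.fst := by
  rw [matrixZariski]
  apply continuous_induced_rng.2
  have hψ : Continuous[coordZariski ((Fin n × Fin n) ⊕ (Fin n × Fin n)) F,
      coordZariski (Fin n × Fin n) F]
      (fun (x : ((Fin n × Fin n) ⊕ (Fin n × Fin n)) → F) (c : Fin n × Fin n) =>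
        x (Sum.inl c)) := by
    have := coord_polyMap_continuous
      (fun c : Fin n × Fin n =>
        (MvPolynomial.X (Sum.inl c) : MvPolynomial ((Fin n × Fin n) ⊕ (Fin n × Fin n)) F))
    simpa [MvPolynomial.eval_X] using this
  exact @Continuous.comp _ _ _ (matrixPairZariski n F) (coordZariski _ F)
    (coordZariski _ F) _ _ hψ continuous_induced_dom

lemma cont_snd :
    Continuous[matrixPairZariski n F, matrixZariski n F] Prod.snd := by
  rw [matrixZariski]
  apply continuous_induced_rng.2
  have hψ : Continuous[coordZariski ((Fin n × Fin n) ⊕ (Fin n × Fin n)) F,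
      coordZariski (Fin n × Fin n) F]
      (fun (x : ((Fin n × Fin n) ⊕ (Fin n × Fin n)) → F) (c : Fin n × Fin n) =>
        x (Sum.inr c)) := by
    have := coord_polyMap_continuous
      (fun c : Fin n × Fin n =>
        (MvPolynomial.X (Sum.inr c) : MvPolynomial ((Fin n × Fin n) ⊕ (Fin n × Fin n)) F))
    simpa [MvPolynomial.eval_X] using this
  exact @Continuous.comp _ _ _ (matrixPairZariski n F) (coordZariski _ F)
    (coordZariski _ F) _ _ hψ continuous_induced_dom

lemma cont_mkL (b : Matrix (Fin n) (Fin n) F) :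
    Continuous[matrixZariski n F, matrixPairZariski n F] (fun x => (x, b)) := by
  rw [matrixPairZariski]
  apply continuous_induced_rng.2
  have hχ : Continuous[coordZariski (Fin n × Fin n) F,
      coordZariski ((Fin n × Fin n) ⊕ (Fin n × Fin n)) F]
      (fun (y : (Fin n × Fin n) → F) (s : (Fin n × Fin n) ⊕ (Fin n × Fin n)) =>
        Sum.elim y (fun c => b c.1 c.2) s) := by
    have := coord_polyMap_continuous
      (fun s : (Fin n × Fin n) ⊕ (Fin n × Fin n) =>
        (Sum.elim (fun c => MvPolynomial.X c)
          (fun c => MvPolynomial.C (b c.1 c.2)) s : MvPolynomial (Fin n × Fin n) F))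
    have heq : (fun (y : (Fin n × Fin n) → F) (s : (Fin n × Fin n) ⊕ (Fin n × Fin n)) =>
        MvPolynomial.eval y (Sum.elim (fun c => MvPolynomial.X c)
          (fun c => MvPolynomial.C (b c.1 c.2)) s))
        = fun y s => Sum.elim y (fun c => b c.1 c.2) s := by
      funext y s
      cases s <;> simp
    rwa [heq] at this
  exact @Continuous.comp _ _ _ (matrixZariski n F) (coordZariski _ F)
    (coordZariski _ F) _ _ hχ continuous_induced_dom

lemma cont_mkR (a : Matrix (Fin n) (Fin n) F) :
    Continuous[matrixZariski n F, matrixPairZariski n F] (fun y => (a, y)) := by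
  rw [matrixPairZariski]
  apply continuous_induced_rng.2
  have hχ : Continuous[coordZariski (Fin n × Fin n) F,
      coordZariski ((Fin n × Fin n) ⊕ (Fin n × Fin n)) F]
      (fun (y : (Fin n × Fin n) → F) (s : (Fin n × Fin n) ⊕ (Fin n × Fin n)) =>
        Sum.elim (fun c => a c.1 c.2) y s) := by
    have := coord_polyMap_continuous
      (fun s : (Fin n × Fin n) ⊕ (Fin n × Fin n) =>
        (Sum.elim (fun c => MvPolynomial.C (a c.1 c.2))
          (fun c => MvPolynomial.X c) s : MvPolynomial (Fin n × Fin n) F))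
    have heq : (fun (y : (Fin n × Fin n) → F) (s : (Fin n × Fin n) ⊕ (Fin n × Fin n)) =>
        MvPolynomial.eval y (Sum.elim (fun c => MvPolynomial.C (a c.1 c.2))
          (fun c => MvPolynomial.X c) s))
        = fun y s => Sum.elim (fun c => a c.1 c.2) y s := by
      funext y s
      cases s <;> simp
    rwa [heq] at this
  exact @Continuous.comp _ _ _ (matrixZariski n F) (coordZariski _ F)
    (coordZariski _ F) _ _ hχ continuous_induced_dom

end Matrices

section Closures

variable {n : ℕ} {F : Type*} [CommRing F]

lemma closure_prod_subset (E₁ E₂ : Set (Matrix (Fin n) (Fin n) F)) :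
    @closure _ (matrixPairZariski n F) (E₁ ×ˢ E₂) ⊆
      (@closure _ (matrixZariski n F) E₁) ×ˢ (@closure _ (matrixZariski n F) E₂) := by
  letI tM : TopologicalSpace (Matrix (Fin n) (Fin n) F) := matrixZariski n F
  letI tP : TopologicalSpace (Matrix (Fin n) (Fin n) F × Matrix (Fin n) (Fin n) F) :=
    matrixPairZariski n F
  apply closure_minimal (Set.prod_mono subset_closure subset_closure)
  rw [Set.prod_eq]
  exact (isClosed_closure.preimage cont_fst).inter (isClosed_closure.preimage cont_snd)

lemma prod_closure_subset (E₁ E₂ : Set (Matrix (Fin n) (Fin n) F)) :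
    (@closure _ (matrixZariski n F) E₁) ×ˢ (@closure _ (matrixZariski n F) E₂) ⊆
      @closure _ (matrixPairZariski n F) (E₁ ×ˢ E₂) := by
  letI tM : TopologicalSpace (Matrix (Fin n) (Fin n) F) := matrixZariski n F
  letI tP : TopologicalSpace (Matrix (Fin n) (Fin n) F × Matrix (Fin n) (Fin n) F) :=
    matrixPairZariski n F
  have step1 : ∀ a ∈ closure E₁, ∀ b ∈ E₂, (a, b) ∈ closure (E₁ ×ˢ E₂) := by
    intro a ha b hb
    have h : closure E₁ ⊆ (fun x => (x, b)) ⁻¹' closure (E₁ ×ˢ E₂) :=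
      closure_minimal (fun x hx => subset_closure ⟨hx, hb⟩)
        (isClosed_closure.preimage (cont_mkL b))
    exact h ha
  rintro ⟨a, b⟩ ⟨ha, hb⟩
  have h : closure E₂ ⊆ (fun y => (a, y)) ⁻¹' closure (E₁ ×ˢ E₂) :=
    closure_minimal (fun y hy => step1 a ha y hy)
      (isClosed_closure.preimage (cont_mkR a))
  exact h hb

end Closures

lemma finrank_prod_submodule {K V W : Type*} [DivisionRing K] [AddCommGroup V] [Module K V]
    [AddCommGroup W] [Module K W] [FiniteDimensional K V] [FiniteDimensional K W]
    (p : Submodule K V) (q : Submodule K W) :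
    Module.finrank K (p.prod q) = Module.finrank K p + Module.finrank K q := by
  have e : (p.prod q) ≃ₗ[K] p × q :=
    { toFun := fun x => (⟨x.1.1, x.2.1⟩, ⟨x.1.2, x.2.2⟩)
      map_add' := fun a b => rfl
      map_smul' := fun c a => rfl
      invFun := fun y => ⟨(y.1.1, y.2.1), ⟨y.1.2, y.2.2⟩⟩
      left_inv := fun a => rfl
      right_inv := fun a => rfl }
  rw [e.finrank_eq, Module.finrank_prod]

theorem linear_capacity_prod' {n : ℕ} {F : Type*} [Field F] [IsAlgClosed F] [CharZero F]
    (E₁ E₂ : Set (Matrix (Fin n) (Fin n) F))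
    (h₁ : @IsIrreducible _ (matrixZariski n F) (@closure _ (matrixZariski n F) E₁))
    (h₂ : @IsIrreducible _ (matrixZariski n F) (@closure _ (matrixZariski n F) E₂))
    (hcone₁ : ∀ (c : F), ∀ x ∈ @closure _ (matrixZariski n F) E₁,
      c • x ∈ @closure _ (matrixZariski n F) E₁)
    (hcone₂ : ∀ (c : F), ∀ x ∈ @closure _ (matrixZariski n F) E₂,
      c • x ∈ @closure _ (matrixZariski n F) E₂) :
    linCapPair (E₁ ×ˢ E₂) = linCap E₁ + linCap E₂ := by
  classical
  obtain ⟨x₁, hx₁⟩ := h₁.1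
  obtain ⟨x₂, hx₂⟩ := h₂.1
  have h0₁ : (0 : (Matrix (Fin n) (Fin n) F)) ∈ @closure _ (matrixZariski n F) E₁ := by
    simpa using hcone₁ 0 x₁ hx₁
  have h0₂ : (0 : (Matrix (Fin n) (Fin n) F)) ∈ @closure _ (matrixZariski n F) E₂ := by
    simpa using hcone₂ 0 x₂ hx₂
  set S₁ : Set ℕ := {d | ∃ L : Submodule F (Matrix (Fin n) (Fin n) F),
    (L : Set (Matrix (Fin n) (Fin n) F)) ⊆ @closure _ (matrixZariski n F) E₁ ∧ Module.finrank F L = d} with hS₁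
  set S₂ : Set ℕ := {d | ∃ L : Submodule F (Matrix (Fin n) (Fin n) F),
    (L : Set (Matrix (Fin n) (Fin n) F)) ⊆ @closure _ (matrixZariski n F) E₂ ∧ Module.finrank F L = d} with hS₂
  set SP : Set ℕ := {d | ∃ L : Submodule F ((Matrix (Fin n) (Fin n) F) × (Matrix (Fin n) (Fin n) F)),
    (L : Set ((Matrix (Fin n) (Fin n) F) × (Matrix (Fin n) (Fin n) F))) ⊆ @closure _ (matrixPairZariski n F) (E₁ ×ˢ E₂) ∧
    Module.finrank F L = d} with hSP
  have hbdd1 : BddAbove S₁ := by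
    refine ⟨Module.finrank F ((Matrix (Fin n) (Fin n) F)), ?_⟩
    rintro d ⟨L, -, rfl⟩
    exact Submodule.finrank_le L
  have hbdd2 : BddAbove S₂ := by
    refine ⟨Module.finrank F ((Matrix (Fin n) (Fin n) F)), ?_⟩
    rintro d ⟨L, -, rfl⟩
    exact Submodule.finrank_le L
  have hbddP : BddAbove SP := by
    refine ⟨Module.finrank F ((Matrix (Fin n) (Fin n) F) × (Matrix (Fin n) (Fin n) F)), ?_⟩
    rintro d ⟨L, -, rfl⟩
    exact Submodule.finrank_le L
  have hne1 : S₁.Nonempty := ⟨0, ⊥, by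
    constructor
    · intro x hx
      simp only [Submodule.bot_coe, Set.mem_singleton_iff] at hx
      subst hx; exact h0₁
    · exact finrank_bot F (Matrix (Fin n) (Fin n) F)⟩
  have hne2 : S₂.Nonempty := ⟨0, ⊥, by
    constructor
    · intro x hx
      simp only [Submodule.bot_coe, Set.mem_singleton_iff] at hx
      subst hx; exact h0₂
    · exact finrank_bot F (Matrix (Fin n) (Fin n) F)⟩
  have hcap : linCap E₁ = sSup S₁ := rfl
  have hcap2 : linCap E₂ = sSup S₂ := rfl
  have hcapP : linCapPair (E₁ ×ˢ E₂) = sSup SP := rfl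
  rw [hcap, hcap2, hcapP]
  apply le_antisymm
  · -- upper bound
    have hneP : SP.Nonempty := ⟨0, ⊥, by
      constructor
      · intro x hx
        simp only [Submodule.bot_coe, Set.mem_singleton_iff] at hx
        subst hx
        exact prod_closure_subset E₁ E₂ ⟨h0₁, h0₂⟩
      · exact finrank_bot F ((Matrix (Fin n) (Fin n) F) × (Matrix (Fin n) (Fin n) F))⟩
    apply csSup_le hneP
    rintro d ⟨L, hL, rfl⟩
    have hL' : (L : Set ((Matrix (Fin n) (Fin n) F) × (Matrix (Fin n) (Fin n) F))) ⊆
        (@closure _ (matrixZariski n F) E₁) ×ˢ (@closure _ (matrixZariski n F) E₂) :=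
      hL.trans (closure_prod_subset E₁ E₂)
    set L₁ := L.map (LinearMap.fst F (Matrix (Fin n) (Fin n) F) (Matrix (Fin n) (Fin n) F)) with hL₁
    set L₂ := L.map (LinearMap.snd F (Matrix (Fin n) (Fin n) F) (Matrix (Fin n) (Fin n) F)) with hL₂def
    have hle : L ≤ L₁.prod L₂ := by
      intro x hx
      exact ⟨Submodule.mem_map_of_mem hx, Submodule.mem_map_of_mem hx⟩
    have h1 : Module.finrank F L ≤ Module.finrank F (L₁.prod L₂) :=
      Submodule.finrank_mono hle
    rw [finrank_prod_submodule] at h1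
    have hm1 : Module.finrank F L₁ ∈ S₁ := by
      refine ⟨L₁, ?_, rfl⟩
      rintro y hy
      obtain ⟨x, hx, rfl⟩ := Submodule.mem_map.1 hy
      exact (hL' hx).1
    have hm2 : Module.finrank F L₂ ∈ S₂ := by
      refine ⟨L₂, ?_, rfl⟩
      rintro y hy
      obtain ⟨x, hx, rfl⟩ := Submodule.mem_map.1 hy
      exact (hL' hx).2
    exact h1.trans (Nat.add_le_add (le_csSup hbdd1 hm1) (le_csSup hbdd2 hm2))
  · -- lower bound
    obtain ⟨L₁, hL₁sub, hL₁rk⟩ := Nat.sSup_mem hne1 hbdd1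
    obtain ⟨L₂, hL₂sub, hL₂rk⟩ := Nat.sSup_mem hne2 hbdd2
    have hsub : ((L₁.prod L₂ : Submodule F ((Matrix (Fin n) (Fin n) F) × (Matrix (Fin n) (Fin n) F))) : Set ((Matrix (Fin n) (Fin n) F) × (Matrix (Fin n) (Fin n) F))) ⊆
        @closure _ (matrixPairZariski n F) (E₁ ×ˢ E₂) := by
      rintro ⟨a, b⟩ hab
      exact prod_closure_subset E₁ E₂ ⟨hL₁sub hab.1, hL₂sub hab.2⟩
    have : Module.finrank F (L₁.prod L₂) ∈ SP :=
      ⟨L₁.prod L₂, hsub, rfl⟩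
    have h := le_csSup hbddP this
    rwa [finrank_prod_submodule, hL₁rk, hL₂rk] at h

theorem linear_capacity_prod {n : ℕ} {F : Type*} [Field F] [IsAlgClosed F] [CharZero F]
    (E₁ E₂ : Set (Matrix (Fin n) (Fin n) F))
    (h₁ : @IsIrreducible _ (matrixZariski n F) (@closure _ (matrixZariski n F) E₁))
    (h₂ : @IsIrreducible _ (matrixZariski n F) (@closure _ (matrixZariski n F) E₂))
    (hcone₁ : ∀ (c : F), ∀ x ∈ @closure _ (matrixZariski n F) E₁,
      c • x ∈ @closure _ (matrixZariski n F) E₁)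
    (hcone₂ : ∀ (c : F), ∀ x ∈ @closure _ (matrixZariski n F) E₂,
      c • x ∈ @closure _ (matrixZariski n F) E₂) :
    linCapPair (E₁ ×ˢ E₂) = linCap E₁ + linCap E₂ := by
  exact linear_capacity_prod' E₁ E₂ h₁ h₂ hcone₁ hcone₂
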